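/- Let n ≥ 1 and let α₀, α₁, …, αₙ : [t₀, t₁] → ℝ be continuous functions with αₙ(t) ≠ 0 for every t ∈ [t₀, t₁], and for each t define the real polynomial p_t(λ) = αₙ(t)λⁿ + αₙ₋₁(t)λⁿ⁻¹ + ⋯ + α₁(t)λ + α₀(t). If p_{t₀} has n distinct real roots and p_{t₁} has some non-real complex root, then there exists t_d ∈ (t₀, t₁) such that p_{t_d} has a real root of multiplicity at least 2. -/

import Mathlib

open Polynomial


lemma ivt_helper {f : ℝ → ℝ} (hf : Continuous f) {a b : ℝ} (hab : a < b)
    (h : f a * f b < 0) : ∃ x ∈ Set.Ioo a b, f x = 0 := by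
  rcases lt_or_ge (f a) 0 with h1 | h1
  · have h2 : 0 < f b := by nlinarith
    obtain ⟨x, hx, hfx⟩ := intermediate_value_Ioo hab.le hf.continuousOn
      (Set.mem_Ioo.2 ⟨h1, h2⟩)
    exact ⟨x, hx, hfx⟩
  · have h2 : f b < 0 := by nlinarith
    obtain ⟨x, hx, hfx⟩ := intermediate_value_Ioo' hab.le hf.continuousOn
      (Set.mem_Ioo.2 ⟨h2, lt_of_le_of_ne h1 (by nlinarith)⟩)
    exact ⟨x, hx, hfx⟩

lemma fact_lemma {n : ℕ} {q : ℝ[X]} (hdeg : q.natDegree = n) (hq : q ≠ 0)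
    {r : Fin n → ℝ} (hinj : Function.Injective r) (hroot : ∀ i, q.IsRoot (r i)) :
    q = C q.leadingCoeff * ∏ i, (X - C (r i)) := by
  have hdvd : (∏ i, (X - C (r i))) ∣ q := by
    apply Finset.prod_dvd_of_coprime
    · exact (pairwise_coprime_X_sub_C hinj).set_pairwise _
    · exact fun i _ => dvd_iff_isRoot.2 (hroot i)
  obtain ⟨d, hd⟩ := hdvd
  have hm : (∏ i : Fin n, (X - C (r i))).Monic :=
    monic_prod_of_monic _ _ fun i _ => monic_X_sub_C _
  have hdm : (∏ i : Fin n, (X - C (r i))).natDegree = n := by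
    rw [natDegree_prod _ _ fun i _ => X_sub_C_ne_zero (r i)]
    simp
  have hd0 : d ≠ 0 := by rintro rfl; simp at hd; exact hq hd
  have hdd : d.natDegree = 0 := by
    have := natDegree_mul (hm.ne_zero) hd0
    rw [← hd, hdeg, hdm] at this
    omega
  have hdc : d = C (d.coeff 0) := eq_C_of_natDegree_eq_zero hdd
  have hlc : q.leadingCoeff = d.coeff 0 := by
    rw [hd, leadingCoeff_mul, hm.leadingCoeff, one_mul, hdc, leadingCoeff_C]
    simp
  conv_lhs => rw [hd, hdc]
  rw [hlc, mul_comm]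

lemma mult_lemma {n : ℕ} {q : ℝ[X]} (hq : q ≠ 0) {c : ℝ} {r : Fin n → ℝ}
    (hfac : q = C c * ∏ i, (X - C (r i))) {i j : Fin n} (hij : i ≠ j) (hr : r i = r j) :
    2 ≤ rootMultiplicity (r i) q := by
  rw [Polynomial.le_rootMultiplicity_iff hq]
  have h2 : ∏ k ∈ ({i, j} : Finset (Fin n)), (X - C (r k)) = (X - C (r i)) ^ 2 := by
    rw [Finset.prod_pair hij, ← hr, sq]
  have : (X - C (r i)) ^ 2 ∣ ∏ k : Fin n, (X - C (r k)) := by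
    rw [← h2]
    exact Finset.prod_dvd_prod_of_subset _ _ _ (Finset.subset_univ _)
  rw [hfac]
  exact this.mul_left _

open Filter Topology

/-- a continuous family of degree-n polynomials that starts with n
distinct real roots and ends with a non-real root must pass through a
polynomial with a multiple real root. -/
theorem multiple_root_along_path (n : ℕ) (hn : 1 ≤ n) (t0 t1 : ℝ) (ht : t0 < t1)
    (α : ℕ → ℝ → ℝ)
    (hcont : ∀ i ≤ n, ContinuousOn (α i) (Set.Icc t0 t1))
    (hlead : ∀ t ∈ Set.Icc t0 t1, α n t ≠ 0)
    (p : ℝ → Polynomial ℝ)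
    (hp : ∀ t, p t = ∑ i ∈ Finset.range (n + 1), C (α i t) * X ^ i)
    (hroots0 : ∃ s : Finset ℝ, s.card = n ∧ ∀ x ∈ s, (p t0).IsRoot x)
    (hroots1 : ∃ w : ℂ, w.im ≠ 0 ∧ ((p t1).map (algebraMap ℝ ℂ)).IsRoot w) :
    ∃ td ∈ Set.Ioo t0 t1, ∃ x : ℝ, 2 ≤ rootMultiplicity x (p td) := by
  classical
  have hIcc : (Set.Icc t0 t1).Nonempty := ⟨t0, le_refl _, ht.le⟩
  -- coefficients of p t
  have hcoeff : ∀ t j, (p t).coeff j = if j ≤ n then α j t else 0 := by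
    intro t j
    rw [hp]
    simp only [finset_sum_coeff, coeff_C_mul, coeff_X_pow, mul_ite, mul_one, mul_zero]
    rw [Finset.sum_ite_eq (Finset.range (n+1)) j (fun i => α i t)]
    simp [Nat.lt_succ_iff]
  have hcn : ∀ t, (p t).coeff n = α n t := by intro t; simp [hcoeff]
  have hne : ∀ t ∈ Set.Icc t0 t1, p t ≠ 0 := by
    intro t htI h0
    exact hlead t htI (by rw [← hcn t, h0]; simp)
  have hdeg : ∀ t ∈ Set.Icc t0 t1, (p t).natDegree = n := by
    intro t htI
    have h1 : (p t).natDegree ≤ n := natDegree_le_iff_coeff_eq_zero.2 fun N hN => by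
      rw [hcoeff]; simp [Nat.not_le.2 hN]
    have h2 : n ≤ (p t).natDegree := le_natDegree_of_ne_zero (by rw [hcn]; exact hlead t htI)
    omega
  have hleadc : ∀ t ∈ Set.Icc t0 t1, (p t).leadingCoeff = α n t := by
    intro t htI
    rw [Polynomial.leadingCoeff, hdeg t htI, hcn]
  have heval : ∀ t x, eval x (p t) = ∑ i ∈ Finset.range (n+1), α i t * x ^ i := by
    intro t x; rw [hp, eval_finset_sum]; simp
  have hevalcont : ∀ x : ℝ, ContinuousOn (fun t => eval x (p t)) (Set.Icc t0 t1) := by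
    intro x
    have : ContinuousOn (fun t => ∑ i ∈ Finset.range (n+1), α i t * x ^ i) (Set.Icc t0 t1) :=
      continuousOn_finset_sum _ fun i hi =>
        (hcont i (Nat.lt_succ_iff.1 (Finset.mem_range.1 hi))).mul continuousOn_const
    exact this.congr fun t _ => heval t x
  -- factorization when we have n distinct roots
  have hfact : ∀ t ∈ Set.Icc t0 t1, ∀ r : Fin n → ℝ, Function.Injective r →
      (∀ i, (p t).IsRoot (r i)) → p t = C (α n t) * ∏ i, (X - C (r i)) := by
    intro t htI r hrinj hroot
    have := fact_lemma (hdeg t htI) (hne t htI) hrinj hroot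
    rwa [hleadc t htI] at this
  -- bounds
  obtain ⟨A, hA⟩ := isCompact_Icc.exists_bound_of_continuousOn
    (f := fun t => ∑ i ∈ Finset.range n, |α i t|)
    (continuousOn_finset_sum _ fun i hi => (hcont i (Finset.mem_range.1 hi).le).abs)
  have hA' : ∀ t ∈ Set.Icc t0 t1, ∑ i ∈ Finset.range n, |α i t| ≤ A := by
    intro t htI
    exact (le_abs_self _).trans (by simpa [Real.norm_eq_abs] using hA t htI)
  have hA0 : 0 ≤ A :=
    le_trans (Finset.sum_nonneg fun i _ => abs_nonneg _) (hA' t0 ⟨le_refl _, ht.le⟩)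
  obtain ⟨ta, hta, hamin⟩ := isCompact_Icc.exists_isMinOn hIcc
    (f := fun t => |α n t|) (hcont n le_rfl).abs
  set a : ℝ := |α n ta| with ha_def
  have ha : 0 < a := abs_pos.2 (hlead ta hta)
  have ha' : ∀ t ∈ Set.Icc t0 t1, a ≤ |α n t| := fun t htI => hamin htI
  set M : ℝ := 1 + A / a with hM_def
  have hM1 : 1 ≤ M := le_add_of_nonneg_right (div_nonneg hA0 ha.le)
  -- root bound
  have hroot_bound : ∀ t ∈ Set.Icc t0 t1, ∀ x : ℝ, (p t).IsRoot x → |x| ≤ M := by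
    intro t htI x hx
    by_contra hxM
    push_neg at hxM
    have h1 : 1 ≤ |x| := le_trans hM1 hxM.le
    have hx0 : (0:ℝ) < |x| := lt_of_lt_of_le one_pos h1
    have he : ∑ i ∈ Finset.range (n+1), α i t * x ^ i = 0 := by
      rw [← heval t x]; exact hx
    rw [Finset.sum_range_succ] at he
    have h2 : a * |x| ^ n ≤ A * |x| ^ (n-1) := by
      have e1 : |α n t * x ^ n| = |∑ i ∈ Finset.range n, α i t * x ^ i| := by
        have : α n t * x ^ n = -(∑ i ∈ Finset.range n, α i t * x ^ i) := by linarith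
        rw [this, abs_neg]
      have e2 : |∑ i ∈ Finset.range n, α i t * x ^ i| ≤
          ∑ i ∈ Finset.range n, |α i t| * |x| ^ (n-1) := by
        refine le_trans (Finset.abs_sum_le_sum_abs _ _) (Finset.sum_le_sum fun i hi => ?_)
        rw [abs_mul, abs_pow]
        exact mul_le_mul_of_nonneg_left
          (pow_le_pow_right₀ h1 (by have := Finset.mem_range.1 hi; omega : i ≤ n - 1)) (abs_nonneg _)
      have e3 : ∑ i ∈ Finset.range n, |α i t| * |x| ^ (n-1) ≤ A * |x| ^ (n-1) := by
        rw [← Finset.sum_mul]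
        exact mul_le_mul_of_nonneg_right (hA' t htI) (pow_nonneg (abs_nonneg _) _)
      calc a * |x| ^ n ≤ |α n t| * |x| ^ n :=
            mul_le_mul_of_nonneg_right (ha' t htI) (pow_nonneg (abs_nonneg _) _)
        _ = |α n t * x ^ n| := by rw [abs_mul, abs_pow]
        _ ≤ A * |x| ^ (n-1) := e1 ▸ le_trans e2 e3
    have hpow : |x| ^ n = |x| * |x| ^ (n-1) := by
      rw [← pow_succ']
      congr 1
      omega
    have hc : (0:ℝ) < |x| ^ (n-1) := pow_pos hx0 _
    rw [hpow, ← mul_assoc] at h2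
    have h3 : a * |x| ≤ A := le_of_mul_le_mul_right h2 hc
    have h4 : |x| ≤ A / a := (le_div_iff₀ ha).2 (by linarith [mul_comm a |x|])
    have : |x| < |x| := lt_of_le_of_lt (h4.trans (by linarith)) hxM
    exact lt_irrefl _ this
  -- the "openness" step via IVT
  have hopen : ∀ tA ∈ Set.Icc t0 t1, tA < t1 →
      (∃ r : Fin n → ℝ, Function.Injective r ∧ ∀ i, (p tA).IsRoot (r i)) →
      ∃ t' ∈ Set.Icc t0 t1, tA < t' ∧
        ∃ r' : Fin n → ℝ, Function.Injective r' ∧ ∀ i, (p t').IsRoot (r' i) := by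
    rintro tA htA htA1 ⟨r, hrinj, hroot⟩
    obtain ⟨ε, hε, hsep⟩ : ∃ ε > 0, ∀ i j : Fin n, i ≠ j → 3 * ε ≤ |r i - r j| := by
      by_cases hemp : (Finset.univ.filter fun ij : Fin n × Fin n => ij.1 ≠ ij.2).Nonempty
      · obtain ⟨ij0, hij0, hmin⟩ := Finset.exists_min_image _
          (fun ij : Fin n × Fin n => |r ij.1 - r ij.2|) hemp
        have hij0' : ij0.1 ≠ ij0.2 := (Finset.mem_filter.1 hij0).2
        have hpos : 0 < |r ij0.1 - r ij0.2| :=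
          abs_pos.2 (sub_ne_zero.2 fun h => hij0' (hrinj h))
        refine ⟨|r ij0.1 - r ij0.2| / 3, by positivity, fun i j hij => ?_⟩
        have := hmin (i, j) (Finset.mem_filter.2 ⟨Finset.mem_univ _, hij⟩)
        linarith
      · refine ⟨1, one_pos, fun i j hij => absurd ?_ hemp⟩
        exact ⟨(i, j), Finset.mem_filter.2 ⟨Finset.mem_univ _, hij⟩⟩
    have hfacA := hfact tA htA r hrinj hroot
    have hsign : ∀ j : Fin n,
        eval (r j - ε) (p tA) * eval (r j + ε) (p tA) < 0 := by
      intro j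
      rw [hfacA]
      simp only [eval_mul, eval_C, eval_prod, eval_sub, eval_X]
      have hprod : (∏ i, (r j - ε - r i)) * (∏ i, (r j + ε - r i)) < 0 := by
        rw [← Finset.prod_mul_distrib,
          ← Finset.prod_erase_mul _ _ (Finset.mem_univ j)]
        apply mul_neg_of_pos_of_neg
        · apply Finset.prod_pos
          intro i hi
          have hij : i ≠ j := Finset.ne_of_mem_erase hi
          have h3 := hsep j i (Ne.symm hij)
          have habs : |r j - r i| ^ 2 = (r j - r i) ^ 2 := sq_abs _
          nlinarith [abs_nonneg (r j - r i)]
        · nlinarith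
      have hc2 : 0 < (α n tA) ^ 2 := by
        rw [← sq_abs]
        exact pow_pos (abs_pos.2 (hlead tA htA)) 2
      calc (α n tA * ∏ i, (r j - ε - r i)) * (α n tA * ∏ i, (r j + ε - r i))
          = (α n tA) ^ 2 * ((∏ i, (r j - ε - r i)) * ∏ i, (r j + ε - r i)) := by ring
        _ < 0 := mul_neg_of_pos_of_neg hc2 hprod
    have hev : ∀ᶠ t in 𝓝[Set.Icc t0 t1] tA,
        ∀ j : Fin n, eval (r j - ε) (p t) * eval (r j + ε) (p t) < 0 := by
      rw [Filter.eventually_all]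
      intro j
      have hc1 : ContinuousWithinAt
          (fun t => eval (r j - ε) (p t) * eval (r j + ε) (p t)) (Set.Icc t0 t1) tA :=
        ((hevalcont _).mul (hevalcont _)) tA htA
      exact hc1.eventually_lt_const (hsign j)
    have hsub : Set.Ioc tA t1 ⊆ Set.Icc t0 t1 := fun x hx => ⟨htA.1.trans hx.1.le, hx.2⟩
    have hev2 : ∀ᶠ t in 𝓝[Set.Ioc tA t1] tA,
        (∀ j : Fin n, eval (r j - ε) (p t) * eval (r j + ε) (p t) < 0) ∧
          t ∈ Set.Ioc tA t1 :=
      (hev.filter_mono (nhdsWithin_mono _ hsub)).and eventually_mem_nhdsWithin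
    rw [nhdsWithin_Ioc_eq_nhdsGT htA1] at hev2
    obtain ⟨t', ht'G, ht'mem⟩ := hev2.exists
    have ht'I : t' ∈ Set.Icc t0 t1 := hsub ht'mem
    have hroots' : ∀ j : Fin n, ∃ x ∈ Set.Ioo (r j - ε) (r j + ε), eval x (p t') = 0 :=
      fun j => ivt_helper (p t').continuous (by linarith) (ht'G j)
    choose x hx1 hx2 using hroots'
    refine ⟨t', ht'I, ht'mem.1, x, ?_, fun i => hx2 i⟩
    intro i j hxy
    by_contra hij
    have h3 := hsep i j hij
    have hxi := hx1 i
    have hxj := hx1 j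
    rw [Set.mem_Ioo] at hxi hxj
    have : |r i - r j| < 2 * ε := by
      rw [abs_sub_lt_iff]
      constructor <;> [skip; skip] <;> nlinarith [hxy]
    linarith
  -- the set S and its sup
  set S : Set ℝ := {t | t ∈ Set.Icc t0 t1 ∧
    ∃ r : Fin n → ℝ, Function.Injective r ∧ ∀ i, (p t).IsRoot (r i)} with hS_def
  have ht0S : t0 ∈ S := by
    obtain ⟨s, hcard, hsr⟩ := hroots0
    refine ⟨⟨le_refl _, ht.le⟩, fun i => ((s.orderIsoOfFin hcard) i : ℝ), ?_, ?_⟩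
    · intro i j hij
      exact (s.orderIsoOfFin hcard).injective (Subtype.ext hij)
    · intro i
      exact hsr _ ((s.orderIsoOfFin hcard) i).2
  have hSbdd : BddAbove S := ⟨t1, fun t htS => htS.1.2⟩
  have hSne : S.Nonempty := ⟨t0, ht0S⟩
  set T := sSup S with hT_def
  have hTmem : T ∈ Set.Icc t0 t1 :=
    ⟨le_csSup hSbdd ht0S, csSup_le hSne fun t htS => htS.1.2⟩
  -- a sequence in S tending to T
  have hu : ∀ k : ℕ, ∃ s ∈ S, T - 1/(k+1) < s := by
    intro k
    apply exists_lt_of_lt_csSup hSne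
    have : (0:ℝ) < 1/(k+1) := by positivity
    linarith
  choose u huS hulow using hu
  have hutend : Tendsto u atTop (𝓝 T) := by
    have hlow : Tendsto (fun k : ℕ => T - 1/(k+1)) atTop (𝓝 T) := by
      have := tendsto_one_div_add_atTop_nhds_zero_nat (𝕜 := ℝ)
      have h2 := (tendsto_const_nhds (x := T) (f := atTop)).sub this
      simpa using h2
    exact tendsto_of_tendsto_of_tendsto_of_le_of_le hlow tendsto_const_nhds
      (fun k => (hulow k).le) (fun k => le_csSup hSbdd (huS k))
  have hrk : ∀ k, ∃ r : Fin n → ℝ, Function.Injective r ∧ ∀ i, (p (u k)).IsRoot (r i) :=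
    fun k => (huS k).2
  choose R hRinj hRroot using hrk
  have hRbd : ∀ k, R k ∈ Set.pi Set.univ fun _ : Fin n => Set.Icc (-M) M := by
    intro k
    rw [Set.mem_univ_pi]
    intro i
    have := hroot_bound (u k) (huS k).1 (R k i) (hRroot k i)
    exact abs_le.1 this
  obtain ⟨r, _, φ, hφ, hrt⟩ :=
    (isCompact_univ_pi fun _ : Fin n => isCompact_Icc).tendsto_subseq hRbd
  have hrti : ∀ i, Tendsto (fun k => R (φ k) i) atTop (𝓝 (r i)) :=
    fun i => tendsto_pi_nhds.1 hrt i
  have huφ : Tendsto (u ∘ φ) atTop (𝓝 T) := hutend.comp hφ.tendsto_atTop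
  have huφ' : Tendsto (u ∘ φ) atTop (𝓝[Set.Icc t0 t1] T) :=
    tendsto_nhdsWithin_of_tendsto_nhds_of_eventually_within _ huφ
      (Filter.Eventually.of_forall fun k => (huS (φ k)).1)
  -- eval identity at T
  have hevalT : ∀ y : ℝ, eval y (p T) = α n T * ∏ i, (y - r i) := by
    intro y
    have hL : Tendsto (fun k => eval y (p (u (φ k)))) atTop (𝓝 (eval y (p T))) :=
      ((hevalcont y) T hTmem).tendsto.comp huφ'
    have hR : Tendsto (fun k => α n (u (φ k)) * ∏ i, (y - R (φ k) i)) atTop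
        (𝓝 (α n T * ∏ i, (y - r i))) :=
      (((hcont n le_rfl) T hTmem).tendsto.comp huφ').mul
        (tendsto_finset_prod _ fun i _ => tendsto_const_nhds.sub (hrti i))
    have heq : ∀ k, eval y (p (u (φ k))) = α n (u (φ k)) * ∏ i, (y - R (φ k) i) := by
      intro k
      rw [hfact (u (φ k)) (huS (φ k)).1 (R (φ k)) (hRinj _) (hRroot _)]
      simp [eval_prod]
    exact tendsto_nhds_unique hL (hR.congr fun k => (heq k).symm)
  have hfacT : p T = C (α n T) * ∏ i, (X - C (r i)) := by
    apply Polynomial.funext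
    intro y
    rw [hevalT y]
    simp [eval_prod]
  -- T < t1 (else p t1 splits over ℝ, contradicting the nonreal root)
  have hT1 : T < t1 := by
    rcases lt_or_eq_of_le hTmem.2 with h | h
    · exact h
    exfalso
    obtain ⟨w, hwim, hwroot⟩ := hroots1
    rw [← h, hfacT] at hwroot
    simp only [IsRoot, Polynomial.map_mul, Polynomial.map_prod, Polynomial.map_sub,
      map_C, map_X, eval_mul, eval_C, eval_prod, eval_sub, eval_X] at hwroot
    rcases mul_eq_zero.1 hwroot with hc | hc
    · exact hlead T hTmem (Complex.ofReal_eq_zero.1 (by simpa using hc))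
    · obtain ⟨i, _, hi⟩ := Finset.prod_eq_zero_iff.1 hc
      have hw : w = ((r i : ℝ) : ℂ) := by
        have := sub_eq_zero.1 hi
        simpa [Algebra.algebraMap_self] using this
      apply hwim
      rw [hw]
      simp
  by_cases hinj : Function.Injective r
  · -- then T ∈ S and we can push past T: contradiction
    exfalso
    have hrootT : ∀ i, (p T).IsRoot (r i) := by
      intro i
      rw [hfacT]
      simp only [IsRoot, eval_mul, eval_C, eval_prod, eval_sub, eval_X]
      rw [Finset.prod_eq_zero (Finset.mem_univ i) (by ring)]
      ring
    obtain ⟨t', ht'I, ht'gt, ht'good⟩ := hopen T hTmem hT1 ⟨r, hinj, hrootT⟩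
    exact absurd (le_csSup hSbdd ⟨ht'I, ht'good⟩) (not_le.2 ht'gt)
  · -- multiple real root at T
    obtain ⟨i, j, hrij, hij⟩ := Function.not_injective_iff.1 hinj
    have hmult := mult_lemma (hne T hTmem) hfacT hij hrij
    have hTgt : t0 < T := by
      obtain ⟨t', ht'I, ht'gt, ht'good⟩ := hopen t0 ⟨le_refl _, ht.le⟩ ht ht0S.2
      exact lt_of_lt_of_le ht'gt (le_csSup hSbdd ⟨ht'I, ht'good⟩)
    exact ⟨T, ⟨hTgt, hT1⟩, r i, hmult⟩
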